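/- arXiv:1110.2076 — 3 statements merged into one kernel-verified Lean document; each statement's English description precedes it below -/
import Mathlib

section
/- Fix integers m ≥ 1, l ≥ 1 and j with 1 ≤ j ≤ m. Work in ℂ[x_1,…,x_m], and let e_1,…,e_m be the elementary symmetric polynomials, p_l = x_1^l + ⋯ + x_m^l the l-th power sum, and h_k the complete homogeneous symmetric polynomial of degree k. Let p_{m,l} and h_{m,k} (for k ≥ 0) be the unique polynomials in m variables X_1,…,X_m over ℂ satisfying p_{m,l}(e_1,…,e_m) = p_l and h_{m,k}(e_1,…,e_m) = h_k, and set h_{m,k} = 0 for k < 0. Then ∂p_{m,l}/∂X_j = (−1)^{j+1} · l · h_{m,l−j}(X_1,…,X_m). -/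
/-!
Statement 0: Fix integers `m ≥ 1`, `l ≥ 1` and `j` with `1 ≤ j ≤ m`.  Working in
`ℂ[x_1, …, x_m]`, let `p_{m,l}` and `h_{m,k}` be the unique polynomials in `m` variables
`X_1, …, X_m` such that substituting the elementary symmetric polynomials `e_1, …, e_m`
yields the `l`-th power sum and the complete homogeneous symmetric polynomial of degree `k`
respectively (with `h_{m,k} = 0` for `k < 0`).  Then
`∂p_{m,l}/∂X_j = (−1)^{j+1} · l · h_{m,l−j}`.

Here the variable index `j ∈ {1, …, m}` is represented by `i : Fin m` via `j = i + 1`.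
-/

open MvPolynomial

open PowerSeries Finset

noncomputable section

variable {R : Type*} [CommRing R]

/-- geometric series -/
def geo (r : R) : PowerSeries R := PowerSeries.mk fun n => r ^ n

def lin (r : R) : PowerSeries R := 1 - PowerSeries.C r * PowerSeries.X

lemma geo_unit (r : R) : lin r * geo r = 1 := by
  ext n
  rw [lin, sub_mul, one_mul, mul_assoc]
  cases n with
  | zero => simp [geo]
  | succ n =>
      simp [geo, PowerSeries.coeff_succ_X_mul, PowerSeries.coeff_C_mul, pow_succ, mul_comm]

lemma esymm_cons (a : R) (s : Multiset R) (n : ℕ) :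
    (a ::ₘ s).esymm (n+1) = s.esymm (n+1) + a * s.esymm n := by
  rw [Multiset.esymm, Multiset.powersetCard_cons, Multiset.map_add, Multiset.sum_add,
    Multiset.esymm, Multiset.map_map]
  rw [show Multiset.map (Multiset.prod ∘ Multiset.cons a) (Multiset.powersetCard n s)
      = Multiset.map (fun t => a * t.prod) (Multiset.powersetCard n s) from
    Multiset.map_congr rfl (fun x _ => by simp [Multiset.prod_cons]),
    Multiset.sum_map_mul_left, Multiset.esymm]

lemma esymm_nil (n : ℕ) : (0 : Multiset R).esymm n = if n = 0 then 1 else 0 := by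
  cases n with
  | zero => simp [Multiset.esymm]
  | succ n => simp [Multiset.esymm, Multiset.powersetCard_zero_right]

lemma coeff_lin_mul (r : R) (f : PowerSeries R) (n : ℕ) :
    PowerSeries.coeff n (lin r * f)
      = PowerSeries.coeff n f - r * (if n = 0 then 0 else PowerSeries.coeff (n-1) f) := by
  rw [lin, sub_mul, one_mul, map_sub, mul_assoc]
  cases n with
  | zero => simp
  | succ n => simp [PowerSeries.coeff_succ_X_mul, PowerSeries.coeff_C_mul]

lemma coeff_prod_lin (s : Multiset R) (n : ℕ) :
    PowerSeries.coeff n (s.map lin).prod = (-1)^n * s.esymm n := by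
  induction s using Multiset.induction generalizing n with
  | empty =>
      cases n <;> simp [esymm_nil, PowerSeries.coeff_one]
  | cons a s ih =>
      rw [Multiset.map_cons, Multiset.prod_cons, coeff_lin_mul]
      cases n with
      | zero => simp [ih, esymm_nil, Multiset.esymm]
      | succ n =>
          rw [esymm_cons, ih, if_neg (Nat.succ_ne_zero n), Nat.succ_sub_one, ih]
          ring

variable {σ : Type*} [Fintype σ] [DecidableEq σ]

def Aser (σ R) [Fintype σ] [CommRing R] : PowerSeries (MvPolynomial σ R) :=
  ∏ i : σ, lin (MvPolynomial.X i)

def Bser (σ R) [Fintype σ] [CommRing R] : PowerSeries (MvPolynomial σ R) :=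
  ∏ i : σ, geo (MvPolynomial.X i)

lemma coeff_Aser (n : ℕ) :
    PowerSeries.coeff n (Aser σ R) = (-1)^n * esymm σ R n := by
  rw [Aser, esymm_eq_multiset_esymm, ← coeff_prod_lin, Finset.prod_eq_multiset_prod,
    Multiset.map_map]
  rfl

lemma coeff_Bser (n : ℕ) :
    PowerSeries.coeff n (Bser σ R) = hsymm σ R n := by
  rw [Bser, PowerSeries.coeff_prod, hsymm]
  refine Finset.sum_bij' (i := fun l hl => (⟨Finsupp.toMultiset l, ?_⟩ : Sym σ n))
      (j := fun μ _ => Multiset.toFinsupp (μ : Multiset σ)) ?_ ?_ ?_ ?_ ?_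
  · rw [Finsupp.card_toMultiset]
    rw [Finset.mem_finsuppAntidiag] at hl
    rw [← hl.1, Finsupp.sum_fintype]
    · rfl
    · intro; rfl
  · intro a ha
    exact Finset.mem_univ _
  · intro μ _
    rw [Finset.mem_finsuppAntidiag]
    constructor
    · rw [show Finset.univ.sum (Multiset.toFinsupp (μ : Multiset σ)) =
          ∑ a : σ, (μ : Multiset σ).count a from rfl]
      rw [Multiset.sum_count_eq_card (fun a _ => Finset.mem_univ a)]
      exact μ.2
    · exact Finset.subset_univ _
  · intro a ha
    simp
  · intro μ _
    apply Sym.coe_injective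
    simp
  · intro l hl
    simp only [geo, PowerSeries.coeff_mk]
    rw [Finset.prod_multiset_map_count]
    rw [show (Finsupp.toMultiset l).toFinset = l.support from Finsupp.toFinset_toMultiset l]
    rw [Finset.prod_subset (Finset.subset_univ l.support) (by
      intro x _ hx
      rw [Finsupp.notMem_support_iff] at hx
      simp [hx])]
    apply Finset.prod_congr rfl
    intro x _
    rw [Finsupp.count_toMultiset]

lemma AB_one : Aser σ R * Bser σ R = 1 := by
  rw [Aser, Bser, ← Finset.prod_mul_distrib]
  simp [geo_unit]

end

noncomputable section Deriv

variable {A : Type*} [CommRing A]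

lemma d_prod {ι : Type*} [DecidableEq ι] (f : ι → PowerSeries A) (s : Finset ι) :
    d⁄dX A (∏ i ∈ s, f i) = ∑ i ∈ s, (∏ j ∈ s.erase i, f j) * d⁄dX A (f i) := by
  induction s using Finset.induction_on with
  | empty => simp
  | insert _ _ ha ih =>
      rename_i a s
      rw [Finset.prod_insert ha, Derivation.leibniz, ih, smul_eq_mul, smul_eq_mul,
        Finset.sum_insert ha, Finset.erase_insert ha, Finset.mul_sum]
      rw [add_comm]
      congr 1
      apply Finset.sum_congr rfl
      intro x hx
      have hxa : x ≠ a := fun h => ha (h ▸ hx)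
      rw [Finset.erase_insert_of_ne (Ne.symm hxa), Finset.prod_insert
        (fun h => ha (Finset.mem_of_mem_erase h))]
      ring

lemma d_lin (r : A) : d⁄dX A (lin r) = -PowerSeries.C r := by
  simp [lin]

lemma coeff_X_mul_d (f : PowerSeries A) (n : ℕ) :
    PowerSeries.coeff n (PowerSeries.X * d⁄dX A f) = n * PowerSeries.coeff n f := by
  cases n with
  | zero => simp
  | succ n =>
      rw [PowerSeries.coeff_succ_X_mul, PowerSeries.coeff_derivative]
      push_cast
      ring

lemma X_mul_d_geo (r : A) :
    PowerSeries.X * d⁄dX A (geo r)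
      = PowerSeries.C r * (PowerSeries.X * (geo r * geo r)) := by
  ext n
  cases n with
  | zero => simp
  | succ n =>
      rw [PowerSeries.coeff_succ_X_mul, PowerSeries.coeff_derivative,
        PowerSeries.coeff_C_mul, PowerSeries.coeff_succ_X_mul, PowerSeries.coeff_mul]
      have : ∀ x ∈ Finset.HasAntidiagonal.antidiagonal n, PowerSeries.coeff x.1 (geo r)
          * PowerSeries.coeff x.2 (geo r) = r ^ n := by
        intro x hx
        rw [Finset.HasAntidiagonal.mem_antidiagonal] at hx
        simp [geo, ← pow_add, hx]
      rw [Finset.sum_congr rfl this, Finset.sum_const, Finset.Nat.card_antidiagonal,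
        nsmul_eq_mul]
      simp only [geo, PowerSeries.coeff_mk]
      push_cast
      ring

end Deriv

noncomputable section Keys

variable (σ R : Type*) [Fintype σ] [DecidableEq σ] [CommRing R]

def Qser : PowerSeries (MvPolynomial σ R) :=
  ∑ i : σ, PowerSeries.C (MvPolynomial.X i) * (PowerSeries.X * geo (MvPolynomial.X i))

lemma coeff_Qser (n : ℕ) :
    PowerSeries.coeff n (Qser σ R) = if n = 0 then 0 else psum σ R n := by
  rw [Qser, map_sum, psum]
  cases n with
  | zero => simp [geo]
  | succ n =>
      rw [if_neg (Nat.succ_ne_zero n)]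
      apply Finset.sum_congr rfl
      intro x _
      rw [PowerSeries.coeff_C_mul, PowerSeries.coeff_succ_X_mul]
      simp [geo, pow_succ, mul_comm]

lemma key2 :
    (-(PowerSeries.X * d⁄dX (MvPolynomial σ R) (Aser σ R))) * Bser σ R = Qser σ R := by
  rw [Aser, d_prod, Finset.mul_sum, neg_mul, Finset.sum_mul, ← Finset.sum_neg_distrib, Qser]
  apply Finset.sum_congr rfl
  intro x _
  rw [d_lin, Bser, ← Finset.mul_prod_erase _ _ (Finset.mem_univ x)]
  have : (∏ j ∈ Finset.univ.erase x, lin (MvPolynomial.X j))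
        * ∏ j ∈ Finset.univ.erase x, geo (MvPolynomial.X j)
      = (1 : PowerSeries (MvPolynomial σ R)) := by
    rw [← Finset.prod_mul_distrib]
    exact Finset.prod_eq_one fun j _ => geo_unit _
  linear_combination (PowerSeries.C (MvPolynomial.X x)
    * (PowerSeries.X * geo (MvPolynomial.X x))) * this

lemma key3 :
    PowerSeries.X * d⁄dX (MvPolynomial σ R) (Bser σ R) = Qser σ R * Bser σ R := by
  rw [Bser, d_prod, Finset.mul_sum, Qser, Finset.sum_mul]
  apply Finset.sum_congr rfl
  intro x _
  rw [mul_left_comm, X_mul_d_geo, ← Finset.mul_prod_erase _ (fun i => geo (MvPolynomial.X i))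
    (Finset.mem_univ x)]
  ring

end Keys

noncomputable section Facts

variable (σ R : Type*) [Fintype σ] [DecidableEq σ] [CommRing R]

lemma coeff_negXdA (a : ℕ) :
    PowerSeries.coeff a (-(PowerSeries.X * d⁄dX (MvPolynomial σ R) (Aser σ R)))
      = (-1)^(a+1) * (a : MvPolynomial σ R) * esymm σ R a := by
  rw [map_neg, coeff_X_mul_d, coeff_Aser]
  ring

lemma F1 (k : ℕ) :
    ∑ ab ∈ Finset.HasAntidiagonal.antidiagonal k,
        (-1 : MvPolynomial σ R)^ab.1 * esymm σ R ab.1 * hsymm σ R ab.2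
      = if k = 0 then 1 else 0 := by
  have := congrArg (PowerSeries.coeff k) (AB_one (σ := σ) (R := R))
  rw [PowerSeries.coeff_mul, PowerSeries.coeff_one] at this
  rw [← this]
  apply Finset.sum_congr rfl
  intro ab _
  rw [coeff_Aser, coeff_Bser, mul_assoc]

lemma F2 (k : ℕ) :
    ∑ ab ∈ Finset.HasAntidiagonal.antidiagonal k,
        (-1 : MvPolynomial σ R)^(ab.1+1) * (ab.1 : MvPolynomial σ R)
          * esymm σ R ab.1 * hsymm σ R ab.2
      = if k = 0 then 0 else psum σ R k := by
  have := congrArg (PowerSeries.coeff k) (key2 σ R)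
  rw [PowerSeries.coeff_mul, coeff_Qser] at this
  rw [← this]
  apply Finset.sum_congr rfl
  intro ab _
  rw [coeff_negXdA, coeff_Bser]

lemma F4 (n : ℕ) :
    ∑ ab ∈ Finset.HasAntidiagonal.antidiagonal n, hsymm σ R ab.1 * hsymm σ R ab.2
      = hsymm σ R n
        + ∑ ab ∈ Finset.HasAntidiagonal.antidiagonal n,
            (if ab.1 = 0 then 0 else (-1 : MvPolynomial σ R)^(ab.1+1) * esymm σ R ab.1)
              * ∑ cd ∈ Finset.HasAntidiagonal.antidiagonal ab.2, hsymm σ R cd.1 * hsymm σ R cd.2 := by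
  have hser : Bser σ R * Bser σ R
      = Bser σ R + (1 - Aser σ R) * (Bser σ R * Bser σ R) := by
    rw [sub_mul, one_mul, ← mul_assoc, AB_one, one_mul]
    ring
  have := congrArg (PowerSeries.coeff n) hser
  rw [PowerSeries.coeff_mul, map_add, PowerSeries.coeff_mul] at this
  have hcoeff : ∀ ab : ℕ × ℕ, ab ∈ Finset.HasAntidiagonal.antidiagonal n →
      PowerSeries.coeff ab.1 (1 - Aser σ R)
        * PowerSeries.coeff ab.2 (Bser σ R * Bser σ R)
      = (if ab.1 = 0 then 0 else (-1 : MvPolynomial σ R)^(ab.1+1) * esymm σ R ab.1)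
          * ∑ cd ∈ Finset.HasAntidiagonal.antidiagonal ab.2, hsymm σ R cd.1 * hsymm σ R cd.2 := by
    intro ab _
    rw [map_sub, coeff_Aser, PowerSeries.coeff_one, PowerSeries.coeff_mul]
    refine congrArg₂ (· * ·) ?_ ?_
    · rcases Nat.eq_zero_or_pos ab.1 with h | h
      · simp [h]
      · rw [if_neg (Nat.pos_iff_ne_zero.mp h), if_neg (Nat.pos_iff_ne_zero.mp h)]
        ring
    · exact Finset.sum_congr rfl fun cd _ => by rw [coeff_Bser, coeff_Bser]
  rw [Finset.sum_congr rfl hcoeff] at this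
  rw [← Finset.sum_congr rfl (fun ab _ => by rw [coeff_Bser, coeff_Bser] :
    ∀ ab ∈ Finset.HasAntidiagonal.antidiagonal n, PowerSeries.coeff ab.1 (Bser σ R)
      * PowerSeries.coeff ab.2 (Bser σ R) = hsymm σ R ab.1 * hsymm σ R ab.2)]
  rw [this, coeff_Bser]

lemma F5 (n : ℕ) :
    (n : MvPolynomial σ R) * hsymm σ R n
      = ∑ ab ∈ Finset.HasAntidiagonal.antidiagonal n,
          (-1 : MvPolynomial σ R)^(ab.1+1) * (ab.1 : MvPolynomial σ R) * esymm σ R ab.1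
            * ∑ cd ∈ Finset.HasAntidiagonal.antidiagonal ab.2, hsymm σ R cd.1 * hsymm σ R cd.2 := by
  have hser : PowerSeries.X * d⁄dX (MvPolynomial σ R) (Bser σ R)
      = (-(PowerSeries.X * d⁄dX (MvPolynomial σ R) (Aser σ R)))
          * (Bser σ R * Bser σ R) := by
    rw [key3, ← key2, mul_assoc]
  have := congrArg (PowerSeries.coeff n) hser
  rw [coeff_X_mul_d, coeff_Bser, PowerSeries.coeff_mul] at this
  rw [this]
  apply Finset.sum_congr rfl
  intro ab _
  rw [coeff_negXdA, PowerSeries.coeff_mul]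
  refine congrArg₂ (· * ·) rfl ?_
  exact Finset.sum_congr rfl fun cd _ => by rw [coeff_Bser, coeff_Bser]

end Facts

noncomputable section MainAux

variable (m : ℕ)

def aevm : MvPolynomial (Fin m) ℂ →ₐ[ℂ] MvPolynomial (Fin m) ℂ :=
  aeval (fun r : Fin m => esymm (Fin m) ℂ ((r : ℕ) + 1))

lemma aevm_inj : Function.Injective (aevm m) := by
  intro p q h
  apply esymmAlgHom_fin_injective (R := ℂ) (n := m) (m := m) le_rfl
  apply Subtype.ext
  rw [esymmAlgHom_apply, esymmAlgHom_apply]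
  exact h

def EvP (a : ℕ) : MvPolynomial (Fin m) ℂ :=
  if a = 0 then 1 else if h : a - 1 < m then MvPolynomial.X (⟨a - 1, h⟩ : Fin m) else 0

lemma aevm_EvP (a : ℕ) : aevm m (EvP m a) = esymm (Fin m) ℂ a := by
  rcases a with _ | b
  · simp [EvP, aevm]
  · rw [EvP, if_neg (Nat.succ_ne_zero b)]
    by_cases h : b < m
    · rw [dif_pos (by simpa using h)]
      simp [aevm]
    · rw [dif_neg (by simpa using h), map_zero]
      have : (Finset.univ : Finset (Fin m)).card < b + 1 := by
        simp only [Finset.card_univ, Fintype.card_fin]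
        omega
      rw [esymm, Finset.powersetCard_eq_empty.mpr this, Finset.sum_empty]

variable (H : ℤ → MvPolynomial (Fin m) ℂ)
variable (hH : ∀ k : ℕ, aevm m (H k) = hsymm (Fin m) ℂ k)

/-- `SSX b = ∑_{c+d=b} H c * H d` -/
def SSX (b : ℕ) : MvPolynomial (Fin m) ℂ :=
  ∑ cd ∈ Finset.HasAntidiagonal.antidiagonal b, H cd.1 * H cd.2

include hH in
lemma aevm_SSX (b : ℕ) :
    aevm m (SSX m H b)
      = ∑ cd ∈ Finset.HasAntidiagonal.antidiagonal b, hsymm (Fin m) ℂ cd.1 * hsymm (Fin m) ℂ cd.2 := by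
  rw [SSX, map_sum]
  exact Finset.sum_congr rfl fun cd _ => by rw [map_mul, hH, hH]

include hH in
lemma X1 (k : ℕ) :
    ∑ ab ∈ Finset.HasAntidiagonal.antidiagonal k,
        (-1 : MvPolynomial (Fin m) ℂ)^ab.1 * (EvP m ab.1 * H ab.2)
      = if k = 0 then 1 else 0 := by
  apply aevm_inj
  rw [map_sum, apply_ite (aevm m), map_one, map_zero, ← F1 (Fin m) ℂ k]
  exact Finset.sum_congr rfl fun ab _ => by
    rw [map_mul, map_mul, map_pow, map_neg, map_one, aevm_EvP, hH, mul_assoc]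

include hH in
lemma X4 (n : ℕ) :
    SSX m H n
      = H n + ∑ ab ∈ Finset.HasAntidiagonal.antidiagonal n,
          (if ab.1 = 0 then 0 else (-1 : MvPolynomial (Fin m) ℂ)^(ab.1+1) * EvP m ab.1)
            * SSX m H ab.2 := by
  apply aevm_inj
  rw [aevm_SSX m H hH, map_add, hH, map_sum, F4 (Fin m) ℂ n]
  congr 1
  exact Finset.sum_congr rfl fun ab _ => by
    rw [map_mul, apply_ite (aevm m), map_zero, map_mul, map_pow, map_neg, map_one,
      aevm_EvP, aevm_SSX m H hH]

include hH in
lemma X5 (n : ℕ) :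
    (n : MvPolynomial (Fin m) ℂ) * H n
      = ∑ ab ∈ Finset.HasAntidiagonal.antidiagonal n,
          ((-1 : MvPolynomial (Fin m) ℂ)^(ab.1+1) * (ab.1 : MvPolynomial (Fin m) ℂ))
            * (EvP m ab.1 * SSX m H ab.2) := by
  apply aevm_inj
  rw [map_mul, map_natCast, hH, F5 (Fin m) ℂ n, map_sum]
  exact Finset.sum_congr rfl fun ab _ => by
    rw [map_mul, map_mul, map_pow, map_neg, map_one, map_natCast, map_mul,
      aevm_EvP, aevm_SSX m H hH]
    ring

end MainAux

noncomputable section DHsec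

variable (m : ℕ) (i : Fin m) (H : ℤ → MvPolynomial (Fin m) ℂ)

lemma EvP_zero : EvP m 0 = 1 := if_pos rfl

lemma pd_EvP (a : ℕ) :
    pderiv i (EvP m a) = if a = (i : ℕ) + 1 then 1 else 0 := by
  rcases a with _ | b
  · rw [if_neg (by omega), EvP, if_pos rfl]
    simp
  · rw [EvP, if_neg (Nat.succ_ne_zero b)]
    by_cases h : b < m
    · rw [dif_pos (by simpa using h), pderiv_X, Pi.single_apply]
      have heq : ((⟨b + 1 - 1, by simpa using h⟩ : Fin m) = i) ↔ (b + 1 = (i:ℕ)+1) := by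
        rw [Fin.ext_iff]
        simp
      by_cases hib : b + 1 = (i:ℕ) + 1
      · rw [if_pos (heq.mpr hib), if_pos hib]
      · rw [if_neg (fun hc => hib (heq.mp hc)), if_neg hib]
    · rw [dif_neg (by simpa using h), map_zero, if_neg (by omega)]

lemma pd_const_mul (c q : MvPolynomial (Fin m) ℂ) (hc : pderiv i c = 0) :
    pderiv i (c * q) = c * pderiv i q := by
  rw [pderiv_mul, hc, zero_mul, zero_add]

lemma pd_neg_one_pow (a : ℕ) :
    pderiv i ((-1 : MvPolynomial (Fin m) ℂ)^a) = 0 := by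
  have : ((-1 : MvPolynomial (Fin m) ℂ)^a) = MvPolynomial.C ((-1 : ℂ)^a) := by
    rw [map_pow, map_neg, map_one]
  rw [this, pderiv_C]

lemma pd_natCast (a : ℕ) :
    pderiv i ((a : MvPolynomial (Fin m) ℂ)) = 0 := by
  rw [show ((a : MvPolynomial (Fin m) ℂ)) = MvPolynomial.C ((a : ℂ)) by
    simp, pderiv_C]

variable (hH : ∀ k : ℕ, aevm m (H k) = hsymm (Fin m) ℂ k)

include hH in
lemma H_zero : H 0 = 1 := by
  apply aevm_inj
  have h0 := hH 0
  rw [Nat.cast_zero] at h0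
  rw [map_one, h0, hsymm_zero]

include hH in
lemma DH : ∀ k : ℕ, pderiv i (H k)
    = if (i : ℕ) + 1 ≤ k then
        (-1 : MvPolynomial (Fin m) ℂ)^(i : ℕ) * SSX m H (k - ((i : ℕ) + 1))
      else 0 := by
  intro k
  induction k using Nat.strong_induction_on with
  | _ k ih =>
  match k with
  | 0 =>
      rw [if_neg (by omega), Nat.cast_zero, H_zero m H hH]
      simp
  | (n+1) =>
      have hx := congrArg (pderiv i) (X1 m H hH (n+1))
      rw [if_neg (Nat.succ_ne_zero n), map_zero, map_sum] at hx
      rw [Finset.sum_congr rfl (fun ab _ => by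
        rw [pd_const_mul m i _ _ (pd_neg_one_pow m i ab.1), pderiv_mul, pd_EvP] :
        ∀ ab ∈ Finset.HasAntidiagonal.antidiagonal (n+1), pderiv i ((-1 : MvPolynomial (Fin m) ℂ)^ab.1
            * (EvP m ab.1 * H ab.2))
          = (-1 : MvPolynomial (Fin m) ℂ)^ab.1
            * ((if ab.1 = (i:ℕ)+1 then 1 else 0) * H ab.2
               + EvP m ab.1 * pderiv i (H ab.2)))] at hx
      have hmem : ((0:ℕ), n+1) ∈ Finset.HasAntidiagonal.antidiagonal (n+1) := by
        simp [Finset.HasAntidiagonal.mem_antidiagonal]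
      rw [← Finset.add_sum_erase _ _ hmem] at hx
      have hterm : (-1 : MvPolynomial (Fin m) ℂ)^(((0:ℕ), n+1) : ℕ × ℕ).1
            * ((if (((0:ℕ), n+1) : ℕ × ℕ).1 = (i:ℕ)+1 then 1 else 0)
                * H (((0:ℕ), n+1) : ℕ × ℕ).2
               + EvP m (((0:ℕ), n+1) : ℕ × ℕ).1
                * pderiv i (H (((0:ℕ), n+1) : ℕ × ℕ).2))
          = pderiv i (H ((n+1 : ℕ))) := by
        simp [EvP_zero]
      rw [hterm] at hx
      have hpd : pderiv i (H ((n+1:ℕ))) =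
          -∑ ab ∈ (Finset.HasAntidiagonal.antidiagonal (n+1)).erase ((0:ℕ), n+1),
            (-1 : MvPolynomial (Fin m) ℂ)^ab.1
              * ((if ab.1 = (i:ℕ)+1 then 1 else 0) * H ab.2
                 + EvP m ab.1 * pderiv i (H ab.2)) := by
        linear_combination hx
      -- apply the inductive hypothesis inside the sum
      have hsum : ∀ ab ∈ (Finset.HasAntidiagonal.antidiagonal (n+1)).erase ((0:ℕ), n+1),
          (-1 : MvPolynomial (Fin m) ℂ)^ab.1
            * ((if ab.1 = (i:ℕ)+1 then 1 else 0) * H ab.2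
               + EvP m ab.1 * pderiv i (H ab.2))
          = (-1 : MvPolynomial (Fin m) ℂ)^ab.1
              * ((if ab.1 = (i:ℕ)+1 then 1 else 0) * H ab.2)
            + (-1 : MvPolynomial (Fin m) ℂ)^ab.1
              * (EvP m ab.1 * (if (i:ℕ)+1 ≤ ab.2 then
                  (-1 : MvPolynomial (Fin m) ℂ)^(i:ℕ) * SSX m H (ab.2 - ((i:ℕ)+1))
                else 0)) := by
        intro ab hab
        have h1 : ab.1 + ab.2 = n + 1 :=
          Finset.HasAntidiagonal.mem_antidiagonal.mp (Finset.mem_of_mem_erase hab)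
        have h2 : ab ≠ ((0:ℕ), n+1) := Finset.ne_of_mem_erase hab
        have h3 : ab.1 ≠ 0 := by
          intro h0
          exact h2 (Prod.ext h0 (by omega))
        have h4 : ab.2 < n + 1 := by omega
        rw [ih ab.2 h4, mul_add]
      rw [Finset.sum_congr rfl hsum, Finset.sum_add_distrib] at hpd
      by_cases hk : (i:ℕ) + 1 ≤ n + 1
      · rw [if_pos hk]
        set j : ℕ := (i:ℕ) + 1 with hj
        set N : ℕ := n + 1 - j with hN
        have hS1 : ∑ ab ∈ (Finset.HasAntidiagonal.antidiagonal (n+1)).erase ((0:ℕ), n+1),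
            (-1 : MvPolynomial (Fin m) ℂ)^ab.1
              * ((if ab.1 = j then 1 else 0) * H ab.2)
            = (-1 : MvPolynomial (Fin m) ℂ)^j * H (N:ℕ) := by
          rw [Finset.sum_eq_single_of_mem (j, N) (by
            rw [Finset.mem_erase]
            refine ⟨fun hc => ?_, Finset.HasAntidiagonal.mem_antidiagonal.mpr (by omega)⟩
            have := congrArg Prod.fst hc
            simp [hj] at this) (fun ab hab habne => by
              have h1 : ab.1 + ab.2 = n + 1 :=
                Finset.HasAntidiagonal.mem_antidiagonal.mp (Finset.mem_of_mem_erase hab)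
              have : ab.1 ≠ j := by
                intro h0
                exact habne (Prod.ext h0 (by omega))
              rw [if_neg this, zero_mul, mul_zero])]
          rw [if_pos rfl, one_mul]
        have hS2 : ∑ ab ∈ (Finset.HasAntidiagonal.antidiagonal (n+1)).erase ((0:ℕ), n+1),
            (-1 : MvPolynomial (Fin m) ℂ)^ab.1
              * (EvP m ab.1 * (if j ≤ ab.2 then
                  (-1 : MvPolynomial (Fin m) ℂ)^(i:ℕ) * SSX m H (ab.2 - j)
                else 0))
            = (-(-1 : MvPolynomial (Fin m) ℂ)^(i:ℕ)) * (SSX m H N - H (N:ℕ)) := by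
          simp only [mul_ite, mul_zero]
          rw [← Finset.sum_filter]
          rw [Finset.sum_nbij' (i := fun ab : ℕ × ℕ => (ab.1, ab.2 - j))
            (j := fun cd : ℕ × ℕ => (cd.1, cd.2 + j))
            (t := (Finset.HasAntidiagonal.antidiagonal N).filter (fun cd => cd.1 ≠ 0))
            (g := fun cd => (-1 : MvPolynomial (Fin m) ℂ)^cd.1
              * (EvP m cd.1 * ((-1 : MvPolynomial (Fin m) ℂ)^(i:ℕ) * SSX m H cd.2)))
            (hi := by
              intro ab hab
              rw [Finset.mem_filter] at hab ⊢
              obtain ⟨hab, hab2⟩ := hab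
              have h1 : ab.1 + ab.2 = n + 1 :=
                Finset.HasAntidiagonal.mem_antidiagonal.mp (Finset.mem_of_mem_erase hab)
              have h3 : ab.1 ≠ 0 := by
                intro h0
                exact (Finset.ne_of_mem_erase hab) (Prod.ext h0 (by omega))
              exact ⟨Finset.HasAntidiagonal.mem_antidiagonal.mpr (show ab.1 + (ab.2 - j) = N by omega), h3⟩)
            (hj := by
              intro cd hcd
              rw [Finset.mem_filter] at hcd ⊢
              obtain ⟨hcd, hcd2⟩ := hcd
              have h1 : cd.1 + cd.2 = N := Finset.HasAntidiagonal.mem_antidiagonal.mp hcd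
              refine ⟨Finset.mem_erase.mpr ⟨fun hc => hcd2 (congrArg Prod.fst hc), ?_⟩,
                show j ≤ cd.2 + j by omega⟩
              exact Finset.HasAntidiagonal.mem_antidiagonal.mpr (show cd.1 + (cd.2 + j) = n + 1 by omega))
            (left_neg := by
              intro ab hab
              rw [Finset.mem_filter] at hab
              dsimp only
              exact Prod.ext rfl (show ab.2 - j + j = ab.2 by omega))
            (right_neg := by
              intro cd _
              dsimp only
              exact Prod.ext rfl (show cd.2 + j - j = cd.2 by omega))
            (h := fun ab hab => rfl)]
          rw [Finset.sum_filter]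
          have hX4 : ∑ cd ∈ Finset.HasAntidiagonal.antidiagonal N,
              (if cd.1 = 0 then 0 else (-1 : MvPolynomial (Fin m) ℂ)^(cd.1+1) * EvP m cd.1)
                * SSX m H cd.2
              = SSX m H N - H (N:ℕ) := by
            have := X4 m H hH N
            linear_combination -this
          rw [← hX4, Finset.mul_sum]
          apply Finset.sum_congr rfl
          intro cd _
          rcases Nat.eq_zero_or_pos cd.1 with h0 | h0
          · rw [if_neg (by omega), if_pos h0, zero_mul, mul_zero]
          · rw [if_pos (by omega), if_neg (by omega)]
            ring
        rw [hpd, hS1, hS2, hj]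
        ring
      · rw [if_neg hk]
        rw [hpd]
        have e1 : ∀ ab ∈ (Finset.HasAntidiagonal.antidiagonal (n+1)).erase ((0:ℕ), n+1),
            (-1 : MvPolynomial (Fin m) ℂ)^ab.1
              * ((if ab.1 = (i:ℕ)+1 then 1 else 0) * H ab.2) = 0 := by
          intro ab hab
          have h1 : ab.1 + ab.2 = n + 1 :=
            Finset.HasAntidiagonal.mem_antidiagonal.mp (Finset.mem_of_mem_erase hab)
          rw [if_neg (by omega), zero_mul, mul_zero]
        have e2 : ∀ ab ∈ (Finset.HasAntidiagonal.antidiagonal (n+1)).erase ((0:ℕ), n+1),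
            (-1 : MvPolynomial (Fin m) ℂ)^ab.1
              * (EvP m ab.1 * (if (i:ℕ)+1 ≤ ab.2 then
                  (-1 : MvPolynomial (Fin m) ℂ)^(i:ℕ) * SSX m H (ab.2 - ((i:ℕ)+1))
                else 0)) = 0 := by
          intro ab hab
          have h1 : ab.1 + ab.2 = n + 1 :=
            Finset.HasAntidiagonal.mem_antidiagonal.mp (Finset.mem_of_mem_erase hab)
          rw [if_neg (by omega), mul_zero, mul_zero]
        rw [Finset.sum_congr rfl e1, Finset.sum_congr rfl e2]
        simp

end DHsec

theorem power_sum_partial_derivative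
    (m l : ℕ) (hm : 1 ≤ m) (hl : 1 ≤ l) (i : Fin m)
    (P : MvPolynomial (Fin m) ℂ) (H : ℤ → MvPolynomial (Fin m) ℂ)
    -- `P` expresses the `l`-th power sum in terms of the elementary symmetric polynomials
    (hP : aeval (fun r : Fin m => esymm (Fin m) ℂ ((r : ℕ) + 1)) P = psum (Fin m) ℂ l)
    -- `H k` expresses the complete homogeneous symmetric polynomial of degree `k ≥ 0`
    (hH : ∀ k : ℕ, aeval (fun r : Fin m => esymm (Fin m) ℂ ((r : ℕ) + 1)) (H k)
            = hsymm (Fin m) ℂ k)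
    -- and `H k = 0` for `k < 0`
    (hHneg : ∀ k : ℤ, k < 0 → H k = 0) :
    pderiv i P
      = (-1 : MvPolynomial (Fin m) ℂ) ^ (((i : ℕ) + 1) + 1) * (l : MvPolynomial (Fin m) ℂ)
          * H ((l : ℤ) - ((i : ℕ) + 1)) := by
  have hH' : ∀ k : ℕ, aevm m (H k) = hsymm (Fin m) ℂ k := hH
  have hP' : aevm m P = psum (Fin m) ℂ l := hP
  have hX2 : P = ∑ ab ∈ Finset.HasAntidiagonal.antidiagonal l,
      ((-1 : MvPolynomial (Fin m) ℂ)^(ab.1+1) * (ab.1 : MvPolynomial (Fin m) ℂ))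
        * (EvP m ab.1 * H ab.2) := by
    apply aevm_inj
    have hF2 := F2 (Fin m) ℂ l
    rw [if_neg (by omega)] at hF2
    rw [hP', ← hF2, map_sum]
    exact Finset.sum_congr rfl fun ab _ => by
      rw [map_mul, map_mul, map_mul, map_pow, map_neg, map_one, map_natCast,
        aevm_EvP, hH']
      ring
  have hpdP := congrArg (pderiv i) hX2
  rw [map_sum] at hpdP
  rw [Finset.sum_congr rfl (fun ab _ => by
      rw [pd_const_mul m i _ _ (by rw [pderiv_mul, pd_neg_one_pow, pd_natCast,
        zero_mul, mul_zero, add_zero]), pderiv_mul, pd_EvP, DH m i H hH' ab.2] :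
    ∀ ab ∈ Finset.HasAntidiagonal.antidiagonal l,
      pderiv i (((-1 : MvPolynomial (Fin m) ℂ)^(ab.1+1) * (ab.1 : MvPolynomial (Fin m) ℂ))
          * (EvP m ab.1 * H ab.2))
        = ((-1 : MvPolynomial (Fin m) ℂ)^(ab.1+1) * (ab.1 : MvPolynomial (Fin m) ℂ))
            * ((if ab.1 = (i:ℕ)+1 then 1 else 0) * H ab.2
               + EvP m ab.1 * (if (i:ℕ)+1 ≤ ab.2 then
                   (-1 : MvPolynomial (Fin m) ℂ)^(i:ℕ) * SSX m H (ab.2 - ((i:ℕ)+1))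
                 else 0)))] at hpdP
  simp only [mul_add] at hpdP
  rw [Finset.sum_add_distrib] at hpdP
  by_cases hjl : (i:ℕ) + 1 ≤ l
  · set N : ℕ := l - ((i:ℕ)+1) with hN
    have hU1 : ∑ ab ∈ Finset.HasAntidiagonal.antidiagonal l,
        ((-1 : MvPolynomial (Fin m) ℂ)^(ab.1+1) * (ab.1 : MvPolynomial (Fin m) ℂ))
          * ((if ab.1 = (i:ℕ)+1 then 1 else 0) * H ab.2)
        = ((-1 : MvPolynomial (Fin m) ℂ)^(((i:ℕ)+1)+1) * (((i:ℕ)+1 : ℕ) : MvPolynomial (Fin m) ℂ))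
            * H (N:ℕ) := by
      rw [Finset.sum_eq_single_of_mem ((i:ℕ)+1, N)
        (Finset.HasAntidiagonal.mem_antidiagonal.mpr (by omega))
        (fun ab hab habne => by
          have h1 : ab.1 + ab.2 = l := Finset.HasAntidiagonal.mem_antidiagonal.mp hab
          have : ab.1 ≠ (i:ℕ)+1 := fun h0 => habne (Prod.ext h0 (by omega))
          rw [if_neg this, zero_mul, mul_zero])]
      rw [if_pos rfl, one_mul]
    have hU2 : ∑ ab ∈ Finset.HasAntidiagonal.antidiagonal l,
        ((-1 : MvPolynomial (Fin m) ℂ)^(ab.1+1) * (ab.1 : MvPolynomial (Fin m) ℂ))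
          * (EvP m ab.1 * (if (i:ℕ)+1 ≤ ab.2 then
              (-1 : MvPolynomial (Fin m) ℂ)^(i:ℕ) * SSX m H (ab.2 - ((i:ℕ)+1))
            else 0))
        = (-1 : MvPolynomial (Fin m) ℂ)^(i:ℕ)
            * ((N : MvPolynomial (Fin m) ℂ) * H (N:ℕ)) := by
      simp only [mul_ite, mul_zero]
      rw [← Finset.sum_filter]
      rw [Finset.sum_nbij' (i := fun ab : ℕ × ℕ => (ab.1, ab.2 - ((i:ℕ)+1)))
        (j := fun cd : ℕ × ℕ => (cd.1, cd.2 + ((i:ℕ)+1)))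
        (t := Finset.HasAntidiagonal.antidiagonal N)
        (g := fun cd => ((-1 : MvPolynomial (Fin m) ℂ)^(cd.1+1)
            * (cd.1 : MvPolynomial (Fin m) ℂ))
          * (EvP m cd.1 * ((-1 : MvPolynomial (Fin m) ℂ)^(i:ℕ) * SSX m H cd.2)))
        (hi := by
          intro ab hab
          rw [Finset.mem_filter] at hab
          have h1 : ab.1 + ab.2 = l := Finset.HasAntidiagonal.mem_antidiagonal.mp hab.1
          exact Finset.HasAntidiagonal.mem_antidiagonal.mpr
            (show ab.1 + (ab.2 - ((i:ℕ)+1)) = N by omega)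
        )
        (hj := by
          intro cd hcd
          have h1 : cd.1 + cd.2 = N := Finset.HasAntidiagonal.mem_antidiagonal.mp hcd
          rw [Finset.mem_filter]
          exact ⟨Finset.HasAntidiagonal.mem_antidiagonal.mpr
              (show cd.1 + (cd.2 + ((i:ℕ)+1)) = l by omega),
            show (i:ℕ)+1 ≤ cd.2 + ((i:ℕ)+1) by omega⟩)
        (left_neg := by
          intro ab hab
          rw [Finset.mem_filter] at hab
          dsimp only
          exact Prod.ext rfl (show ab.2 - ((i:ℕ)+1) + ((i:ℕ)+1) = ab.2 by omega))
        (right_neg := by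
          intro cd _
          dsimp only
          exact Prod.ext rfl (show cd.2 + ((i:ℕ)+1) - ((i:ℕ)+1) = cd.2 by omega))
        (h := fun ab hab => rfl)]
      rw [X5 m H hH' N, Finset.mul_sum]
      exact Finset.sum_congr rfl fun cd _ => by ring
    rw [hU1, hU2] at hpdP
    have harg : (l:ℤ) - ((i:ℕ)+1) = ((N:ℕ):ℤ) := by omega
    rw [hpdP, harg]
    rw [show ((N:ℕ) : MvPolynomial (Fin m) ℂ)
        = ((l:ℕ) : MvPolynomial (Fin m) ℂ) - (((i:ℕ)+1 : ℕ) : MvPolynomial (Fin m) ℂ) by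
      rw [← Nat.cast_sub hjl]]
    ring
  · have hU1 : ∀ ab ∈ Finset.HasAntidiagonal.antidiagonal l,
        ((-1 : MvPolynomial (Fin m) ℂ)^(ab.1+1) * (ab.1 : MvPolynomial (Fin m) ℂ))
          * ((if ab.1 = (i:ℕ)+1 then 1 else 0) * H ab.2) = 0 := by
      intro ab hab
      have h1 : ab.1 + ab.2 = l := Finset.HasAntidiagonal.mem_antidiagonal.mp hab
      rw [if_neg (by omega), zero_mul, mul_zero]
    have hU2 : ∀ ab ∈ Finset.HasAntidiagonal.antidiagonal l,
        ((-1 : MvPolynomial (Fin m) ℂ)^(ab.1+1) * (ab.1 : MvPolynomial (Fin m) ℂ))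
          * (EvP m ab.1 * (if (i:ℕ)+1 ≤ ab.2 then
              (-1 : MvPolynomial (Fin m) ℂ)^(i:ℕ) * SSX m H (ab.2 - ((i:ℕ)+1))
            else 0)) = 0 := by
      intro ab hab
      have h1 : ab.1 + ab.2 = l := Finset.HasAntidiagonal.mem_antidiagonal.mp hab
      rw [if_neg (by omega), mul_zero, mul_zero]
    rw [Finset.sum_congr rfl hU1, Finset.sum_congr rfl hU2] at hpdP
    rw [hHneg ((l:ℤ) - ((i:ℕ)+1)) (by omega), mul_zero]
    simpa using hpdP
end

section
/- Let C be a Krull–Schmidt ℂ-category with finite biproducts, and let F : C → C be a strongly non-periodic autofunctor: F is an equivalence with a chosen inverse F^{−1}, and for every object A and every k ∈ ℤ, F^k(A) ≅ A implies that A is a zero object or k = 0. Let k ≤ l be integers and b_k, …, b_l nonnegative integers, not all zero, and for an object A define G(A) = ⊕_{i=k}^{l} F^i(A)^{⊕ b_i} (the biproduct of b_i copies of F^i(A) over all i). If A and B are objects of C with G(A) ≅ G(B), then A ≅ B. -/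
/-!
Statement 11: Let `C` be a Krull–Schmidt `ℂ`-category with finite biproducts and let
`F : C → C` be a strongly non-periodic autofunctor (an equivalence, with chosen inverse,
such that `F^k(A) ≅ A` forces `A ≅ 0` or `k = 0`).  For integers `k ≤ l` and nonnegative
integers `b_k, …, b_l`, not all zero, set `G(A) = ⊕_{i=k}^{l} F^i(A)^{⊕ b_i}`.
If `G(A) ≅ G(B)`, then `A ≅ B`.
-/

open CategoryTheory CategoryTheory.Limits

universe v u

variable {C : Type u} [Category.{v} C]

/-- The `n`-fold composition of an endofunctor. -/
def natPow (F : C ⥤ C) : ℕ → (C ⥤ C)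
  | 0 => 𝟭 C
  | n + 1 => natPow F n ⋙ F

/-- The `i`-th power (for `i : ℤ`) of a self-equivalence: the `i`-fold composition of
`F = e.functor` for `i ≥ 0`, and of the inverse `F⁻¹ = e.inverse` for `i < 0`. -/
def zpowFunctor (e : C ≌ C) : ℤ → (C ⥤ C)
  | Int.ofNat n => natPow e.functor n
  | Int.negSucc n => natPow e.inverse (n + 1)

/-! ### Auxiliary results about powers of a self-equivalence -/

/-- Shifting the exponent up by one, up to natural isomorphism. -/
noncomputable def zpowSuccIso (e : C ≌ C) : ∀ (m : ℤ) (X : C),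
    (zpowFunctor e (m + 1)).obj X ≅ e.functor.obj ((zpowFunctor e m).obj X)
  | Int.ofNat n, X => by
      have h : (Int.ofNat n) + 1 = Int.ofNat (n + 1) := rfl
      rw [h]
      exact Iso.refl _
  | Int.negSucc 0, X => by
      have h : (Int.negSucc 0) + 1 = (0 : ℤ) := rfl
      rw [h]
      exact (e.counitIso.app X).symm
  | Int.negSucc (n + 1), X => by
      have h : (Int.negSucc (n + 1)) + 1 = Int.negSucc n := rfl
      rw [h]
      exact (e.counitIso.app ((natPow e.inverse (n + 1)).obj X)).symm

/-- Shifting the exponent down by one, up to natural isomorphism. -/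
noncomputable def zpowPredIso (e : C ≌ C) : ∀ (m : ℤ) (X : C),
    (zpowFunctor e (m - 1)).obj X ≅ e.inverse.obj ((zpowFunctor e m).obj X)
  | Int.ofNat 0, X => by
      have h : (Int.ofNat 0) - 1 = Int.negSucc 0 := by decide
      rw [h]
      exact Iso.refl _
  | Int.ofNat (n + 1), X => by
      have h : (Int.ofNat (n + 1)) - 1 = Int.ofNat n := by
        show ((n : ℤ) + 1) - 1 = (n : ℤ); ring
      rw [h]
      exact e.unitIso.app ((natPow e.functor n).obj X)
  | Int.negSucc n, X => by
      have h : (Int.negSucc n) - 1 = Int.negSucc (n + 1) := Int.negSucc_sub_one n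
      rw [h]
      exact Iso.refl _

lemma zpow_shift (e : C ≌ C) (Z X : C) (d : ℤ) :
    ∀ (t s : ℤ), Nonempty ((zpowFunctor e t).obj Z ≅ (zpowFunctor e s).obj X) →
      Nonempty ((zpowFunctor e (t + d)).obj Z ≅ (zpowFunctor e (s + d)).obj X) := by
  induction d using Int.induction_on with
  | zero => simp only [add_zero]; exact fun t s h => h
  | succ i ih =>
      intro t s ⟨hiso⟩
      obtain ⟨ih'⟩ := ih t s ⟨hiso⟩
      have h1 : t + (i + 1 : ℤ) = (t + i) + 1 := by ring
      have h2 : s + (i + 1 : ℤ) = (s + i) + 1 := by ring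
      rw [h1, h2]
      exact ⟨zpowSuccIso e (t + i) Z ≪≫ e.functor.mapIso ih' ≪≫ (zpowSuccIso e (s + i) X).symm⟩
  | pred i ih =>
      intro t s ⟨hiso⟩
      obtain ⟨ih'⟩ := ih t s ⟨hiso⟩
      have h1 : t + (-i - 1 : ℤ) = (t + -i) - 1 := by ring
      have h2 : s + (-i - 1 : ℤ) = (s + -i) - 1 := by ring
      rw [h1, h2]
      exact ⟨zpowPredIso e (t + -i) Z ≪≫ e.inverse.mapIso ih' ≪≫ (zpowPredIso e (s + -i) X).symm⟩

lemma zpow_cancel_iff (e : C ≌ C) (i t : ℤ) (Z X : C) :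
    Nonempty ((zpowFunctor e i).obj Z ≅ (zpowFunctor e t).obj X) ↔
      Nonempty (Z ≅ (zpowFunctor e (t - i)).obj X) := by
  constructor
  · intro h
    have := zpow_shift e Z X (-i) i t h
    rw [add_neg_cancel] at this
    rw [show t + -i = t - i by ring] at this
    rw [show Z = (zpowFunctor e 0).obj Z from rfl]
    exact this
  · intro h
    have h0 : Nonempty ((zpowFunctor e 0).obj Z ≅ (zpowFunctor e (t - i)).obj X) := h
    have := zpow_shift e Z X i 0 (t - i) h0
    rw [zero_add, sub_add_cancel] at this
    exact this

lemma zpow_free (e : C ≌ C)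
    (hF : ∀ (A : C) (k : ℤ), Nonempty ((zpowFunctor e k).obj A ≅ A) → IsZero A ∨ k = 0)
    (X : C) (hX : ¬IsZero X) (t s : ℤ)
    (h : Nonempty ((zpowFunctor e t).obj X ≅ (zpowFunctor e s).obj X)) : t = s := by
  obtain ⟨h1⟩ := (zpow_cancel_iff e t s X X).mp h
  rcases hF X (s - t) ⟨h1.symm⟩ with h2 | h2
  · exact absurd h2 hX
  · omega

instance natPow_isEquivalence (F : C ⥤ C) [F.IsEquivalence] (n : ℕ) :
    (natPow F n).IsEquivalence := by
  induction n with
  | zero => exact inferInstanceAs (𝟭 C).IsEquivalence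
  | succ n ih => exact inferInstanceAs (natPow F n ⋙ F).IsEquivalence

instance zpow_isEquivalence (e : C ≌ C) (i : ℤ) : (zpowFunctor e i).IsEquivalence := by
  cases i with
  | ofNat n => exact natPow_isEquivalence e.functor n
  | negSucc n =>
      have : e.inverse.IsEquivalence := e.isEquivalence_inverse
      exact natPow_isEquivalence e.inverse (n + 1)

lemma support_finite (e : C ≌ C)
    (hF : ∀ (A : C) (k : ℤ), Nonempty ((zpowFunctor e k).obj A ≅ A) → IsZero A ∨ k = 0)
    {n : ℕ} (f : Fin n → C) (X : C) (hX : ¬IsZero X) :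
    {s : ℤ | Nat.card {j : Fin n // Nonempty (f j ≅ (zpowFunctor e s).obj X)} ≠ 0}.Finite := by
  have hsub : ∀ j : Fin n, {s : ℤ | Nonempty (f j ≅ (zpowFunctor e s).obj X)}.Subsingleton := by
    intro j s hs s' hs'
    exact zpow_free e hF X hX s s' ⟨hs.some.symm ≪≫ hs'.some⟩
  apply Set.Finite.subset (Set.finite_iUnion (fun j : Fin n => (hsub j).finite))
  intro s hs
  simp only [Set.mem_setOf_eq] at hs
  obtain ⟨⟨j, hj⟩⟩ := (Nat.card_ne_zero.mp hs).1
  exact Set.mem_iUnion.mpr ⟨j, hj⟩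

/-! ### Counting lemmas -/

lemma nat_card_subtype_sigma {α : Type*} {β : α → Type*} [Fintype α] [∀ a, Fintype (β a)]
    (P : (Σ a, β a) → Prop) :
    Nat.card {x : Σ a, β a // P x} = ∑ a : α, Nat.card {b : β a // P ⟨a, b⟩} := by
  classical
  have eqv : {x : Σ a, β a // P x} ≃ Σ a : α, {b : β a // P ⟨a, b⟩} :=
    { toFun := fun x => ⟨x.1.1, ⟨x.1.2, by obtain ⟨⟨a, bb⟩, h⟩ := x; exact h⟩⟩
      invFun := fun y => ⟨⟨y.1, y.2.1⟩, y.2.2⟩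
      left_inv := fun ⟨⟨a, bb⟩, h⟩ => rfl
      right_inv := fun ⟨a, bb, h⟩ => rfl }
  rw [Nat.card_congr eqv, Nat.card_eq_fintype_card, Fintype.card_sigma]
  simp [Nat.card_eq_fintype_card]

lemma count_eq (e : C ≌ C) (k l : ℤ) (b : ℤ → ℕ) {n : ℕ} (f : Fin n → C) (X : C) (t : ℤ) :
    Nat.card {q : Σ _p : (Σ i : (Finset.Icc k l : Finset ℤ), Fin (b (i : ℤ))), Fin n //
        Nonempty ((zpowFunctor e (q.1.1 : ℤ)).obj (f q.2) ≅ (zpowFunctor e t).obj X)}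
      = ∑ i ∈ Finset.Icc k l,
          b i * Nat.card {j : Fin n // Nonempty (f j ≅ (zpowFunctor e (t - i)).obj X)} := by
  rw [nat_card_subtype_sigma]
  have hterm : ∀ p : Σ i : (Finset.Icc k l : Finset ℤ), Fin (b (i : ℤ)),
      Nat.card {j : Fin n //
          Nonempty ((zpowFunctor e (p.1 : ℤ)).obj (f j) ≅ (zpowFunctor e t).obj X)}
        = Nat.card {j : Fin n // Nonempty (f j ≅ (zpowFunctor e (t - (p.1 : ℤ))).obj X)} := by
    intro p
    exact Nat.card_congr ((Equiv.refl _).subtypeEquiv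
      (fun j => by rw [Equiv.refl_apply]; exact zpow_cancel_iff e _ t (f j) X))
  calc ∑ p : Σ i : (Finset.Icc k l : Finset ℤ), Fin (b (i : ℤ)),
        Nat.card {j : Fin n //
          Nonempty ((zpowFunctor e (p.1 : ℤ)).obj (f j) ≅ (zpowFunctor e t).obj X)}
      = ∑ p : Σ i : (Finset.Icc k l : Finset ℤ), Fin (b (i : ℤ)),
        Nat.card {j : Fin n // Nonempty (f j ≅ (zpowFunctor e (t - (p.1 : ℤ))).obj X)} :=
        Finset.sum_congr rfl (fun p _ => hterm p)
    _ = ∑ i : (Finset.Icc k l : Finset ℤ), ∑ _c : Fin (b (i : ℤ)),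
        Nat.card {j : Fin n // Nonempty (f j ≅ (zpowFunctor e (t - (i : ℤ))).obj X)} := by
        rw [← Finset.univ_sigma_univ, Finset.sum_sigma]
    _ = ∑ i : (Finset.Icc k l : Finset ℤ), b (i : ℤ) *
          Nat.card {j : Fin n // Nonempty (f j ≅ (zpowFunctor e (t - (i : ℤ))).obj X)} := by
        simp [Finset.sum_const, mul_comm]
    _ = ∑ i ∈ Finset.Icc k l,
          b i * Nat.card {j : Fin n // Nonempty (f j ≅ (zpowFunctor e (t - i)).obj X)} :=
        Finset.sum_coe_sort (Finset.Icc k l)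
          (fun i => b i * Nat.card {j : Fin n // Nonempty (f j ≅ (zpowFunctor e (t - i)).obj X)})

/-- A convolution cancellation lemma for finitely supported `ℕ`-valued functions on `ℤ`. -/
lemma conv_cancel (k l : ℤ) (b : ℤ → ℕ) (hb : ∃ i ∈ Finset.Icc k l, b i ≠ 0)
    (aA aB : ℤ → ℕ) (hfin : {t : ℤ | aA t ≠ 0 ∨ aB t ≠ 0}.Finite)
    (hE : ∀ t, ∑ i ∈ Finset.Icc k l, b i * aA (t - i)
        = ∑ i ∈ Finset.Icc k l, b i * aB (t - i)) :
    ∀ t, aA t = aB t := by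
  classical
  by_contra hcon
  push_neg at hcon
  obtain ⟨tw, htw⟩ := hcon
  set D : ℤ → ℤ := fun t => (aA t : ℤ) - aB t with hD
  set T : Finset ℤ := hfin.toFinset.filter (fun t => aA t ≠ aB t) with hT
  have hmemT : ∀ t, aA t ≠ aB t → t ∈ T := by
    intro t ht
    rw [hT, Finset.mem_filter, Set.Finite.mem_toFinset]
    refine ⟨?_, ht⟩
    by_contra hz
    simp only [Set.mem_setOf_eq, not_or, not_not] at hz
    exact ht (hz.1.trans hz.2.symm)
  have hTne : T.Nonempty := ⟨tw, hmemT tw htw⟩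
  set t₀ := T.max' hTne with ht₀
  obtain ⟨iw, hiwmem, hiw⟩ := hb
  set Tb : Finset ℤ := (Finset.Icc k l).filter (fun i => b i ≠ 0) with hTb
  have hTbne : Tb.Nonempty := ⟨iw, by rw [hTb, Finset.mem_filter]; exact ⟨hiwmem, hiw⟩⟩
  set i₀ := Tb.max' hTbne with hi₀
  have hi₀mem : i₀ ∈ Tb := Tb.max'_mem hTbne
  have hi₀Icc : i₀ ∈ Finset.Icc k l := (Finset.mem_filter.mp hi₀mem).1
  have hi₀b : b i₀ ≠ 0 := (Finset.mem_filter.mp hi₀mem).2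
  have hsum : ∑ i ∈ Finset.Icc k l, (b i : ℤ) * D (t₀ + i₀ - i) = 0 := by
    have h1 := hE (t₀ + i₀)
    have h2 : ∑ i ∈ Finset.Icc k l, (b i : ℤ) * D (t₀ + i₀ - i)
        = (∑ i ∈ Finset.Icc k l, (b i : ℤ) * (aA (t₀ + i₀ - i) : ℤ))
          - ∑ i ∈ Finset.Icc k l, (b i : ℤ) * (aB (t₀ + i₀ - i) : ℤ) := by
      rw [← Finset.sum_sub_distrib]
      exact Finset.sum_congr rfl (fun i _ => by rw [hD]; ring)
    rw [h2, sub_eq_zero]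
    exact_mod_cast h1
  have hzero : ∀ s : ℤ, t₀ < s → D s = 0 := by
    intro s hs
    by_contra hds
    have hne : aA s ≠ aB s := by
      intro hEq; apply hds; rw [hD]; simp [hEq]
    exact absurd (T.le_max' s (hmemT s hne)) (not_le.mpr hs)
  have hsingle : ∑ i ∈ Finset.Icc k l, (b i : ℤ) * D (t₀ + i₀ - i) = (b i₀ : ℤ) * D t₀ := by
    rw [Finset.sum_eq_single_of_mem i₀ hi₀Icc]
    · norm_num
    · intro i hi hne
      by_cases hbi : b i = 0
      · simp [hbi]
      · have hmemTb : i ∈ Tb := by rw [hTb, Finset.mem_filter]; exact ⟨hi, hbi⟩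
        have : i < i₀ := lt_of_le_of_ne (Tb.le_max' i hmemTb) hne
        rw [hzero (t₀ + i₀ - i) (by omega)]
        ring
  rw [hsingle] at hsum
  have hDt₀ : D t₀ = 0 := by
    rcases mul_eq_zero.mp hsum with h | h
    · exact absurd (by exact_mod_cast h) hi₀b
    · exact h
  have ht₀T : t₀ ∈ T := T.max'_mem hTne
  have heq : aA t₀ = aB t₀ := by
    rw [hD] at hDt₀
    exact_mod_cast sub_eq_zero.mp hDt₀
  exact (Finset.mem_filter.mp ht₀T).2 heq

section

variable (C)
variable [Preadditive C] [CategoryTheory.Linear ℂ C] [HasFiniteBiproducts C]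

attribute [local instance] hasBinaryBiproducts_of_finite_biproducts

/-- A `ℂ`-category with finite biproducts is Krull–Schmidt if every object is isomorphic
to a finite biproduct of indecomposable objects, and such a decomposition is unique up to
permutation and isomorphism of the summands. -/
def IsKrullSchmidt : Prop :=
  (∀ X : C, ∃ (n : ℕ) (f : Fin n → C),
    (∀ i, Indecomposable (f i)) ∧ Nonempty (X ≅ ⨁ f)) ∧
  (∀ (n l : ℕ) (f : Fin n → C) (g : Fin l → C),
    (∀ i, Indecomposable (f i)) → (∀ j, Indecomposable (g j)) →
    Nonempty ((⨁ f) ≅ ⨁ g) →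
    ∃ σ : Fin n ≃ Fin l, ∀ i, Nonempty (f i ≅ g (σ i)))

variable {C}

lemma equiv_additive (F : C ⥤ C) [F.IsEquivalence] : F.Additive :=
  Functor.additive_of_preserves_binary_products F

lemma isZero_map_iff (F : C ⥤ C) [F.IsEquivalence] (X : C) :
    IsZero (F.obj X) ↔ IsZero X := by
  have hadd := equiv_additive F
  rw [IsZero.iff_id_eq_zero, IsZero.iff_id_eq_zero]
  constructor
  · intro h
    apply F.map_injective
    rw [F.map_id, F.map_zero, h]
  · intro h
    rw [← F.map_id, h, F.map_zero]

lemma indecomposable_map (F : C ⥤ C) [F.IsEquivalence] {X : C}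
    (hX : Indecomposable X) : Indecomposable (F.obj X) := by
  have hadd := equiv_additive F
  have hadd' := equiv_additive F.inv
  have hpres : PreservesBinaryBiproducts F.inv :=
    preservesBinaryBiproducts_of_preservesBinaryProducts _
  constructor
  · rw [isZero_map_iff F]
    exact hX.1
  · intro Y Z i
    have i2 : X ≅ F.inv.obj Y ⊞ F.inv.obj Z :=
      F.asEquivalence.unitIso.app X ≪≫ F.inv.mapIso i ≪≫ F.inv.mapBiprod Y Z
    rcases hX.2 _ _ i2 with h | h
    · exact Or.inl ((isZero_map_iff F.inv Y).mp h)
    · exact Or.inr ((isZero_map_iff F.inv Z).mp h)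

/-- `G(A) = ⊕_{i=k}^{l} F^i(A)^{⊕ b_i}`: the biproduct, over `i ∈ [k, l]` and over `b_i`
copies, of `F^i(A)`. -/
noncomputable def Gobj (e : C ≌ C) (k l : ℤ) (b : ℤ → ℕ) (A : C) : C :=
  ⨁ (fun p : Σ i : (Finset.Icc k l : Finset ℤ), Fin (b (i : ℤ)) =>
      (zpowFunctor e (p.1 : ℤ)).obj A)

lemma gobj_iso (e : C ≌ C) (k l : ℤ) (b : ℤ → ℕ) {A : C} {n : ℕ} (f : Fin n → C)
    (iA : A ≅ ⨁ f) :
    Nonempty (Gobj e k l b A ≅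
      ⨁ (fun q : Σ _p : (Σ i : (Finset.Icc k l : Finset ℤ), Fin (b (i : ℤ))), Fin n =>
        (zpowFunctor e (q.1.1 : ℤ)).obj (f q.2))) := by
  have hcomp : ∀ p : Σ i : (Finset.Icc k l : Finset ℤ), Fin (b (i : ℤ)),
      (zpowFunctor e (p.1 : ℤ)).obj A ≅ ⨁ (fun j => (zpowFunctor e (p.1 : ℤ)).obj (f j)) := by
    intro p
    letI : (zpowFunctor e (p.1 : ℤ)).Additive := equiv_additive _
    exact (zpowFunctor e (p.1 : ℤ)).mapIso iA ≪≫ Functor.mapBiproduct _ f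
  refine ⟨?_⟩
  refine biproduct.mapIso hcomp ≪≫ biproduct.isoCoproduct _ ≪≫ ?_ ≪≫
    (biproduct.isoCoproduct _).symm
  refine Sigma.mapIso (fun p => biproduct.isoCoproduct _) ≪≫ ?_
  exact sigmaSigmaIso _ _

theorem krull_schmidt_nonperiodic_cancellation
    (hKS : IsKrullSchmidt C) (e : C ≌ C)
    (hF : ∀ (A : C) (k : ℤ), Nonempty ((zpowFunctor e k).obj A ≅ A) → IsZero A ∨ k = 0)
    (k l : ℤ) (hkl : k ≤ l) (b : ℤ → ℕ) (hb : ∃ i ∈ Finset.Icc k l, b i ≠ 0)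
    (A B : C) (h : Nonempty (Gobj e k l b A ≅ Gobj e k l b B)) :
    Nonempty (A ≅ B) := by
  classical
  obtain ⟨Giso⟩ := h
  obtain ⟨n, f, hf, ⟨iA⟩⟩ := hKS.1 A
  obtain ⟨m, g, hg, ⟨iB⟩⟩ := hKS.1 B
  obtain ⟨GA⟩ := gobj_iso e k l b f iA
  obtain ⟨GB⟩ := gobj_iso e k l b g iB
  let famA : (Σ _p : (Σ i : (Finset.Icc k l : Finset ℤ), Fin (b (i : ℤ))), Fin n) → C :=
    fun q => (zpowFunctor e (q.1.1 : ℤ)).obj (f q.2)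
  let famB : (Σ _p : (Σ i : (Finset.Icc k l : Finset ℤ), Fin (b (i : ℤ))), Fin m) → C :=
    fun q => (zpowFunctor e (q.1.1 : ℤ)).obj (g q.2)
  let εA := (Fintype.equivFin
    (Σ _p : (Σ i : (Finset.Icc k l : Finset ℤ), Fin (b (i : ℤ))), Fin n)).symm
  let εB := (Fintype.equivFin
    (Σ _p : (Σ i : (Finset.Icc k l : Finset ℤ), Fin (b (i : ℤ))), Fin m)).symm
  have wA : ∀ q, (famA ∘ εA) (εA.symm q) ≅ famA q :=
    fun q => eqToIso (by simp)
  have wB : ∀ q, (famB ∘ εB) (εB.symm q) ≅ famB q :=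
    fun q => eqToIso (by simp)
  have totBig : Nonempty (⨁ (famA ∘ εA) ≅ ⨁ (famB ∘ εB)) :=
    ⟨(biproduct.whiskerEquiv εA.symm wA).symm ≪≫ GA.symm ≪≫ Giso ≪≫ GB ≪≫
      (biproduct.whiskerEquiv εB.symm wB)⟩
  have hindA : ∀ i, Indecomposable ((famA ∘ εA) i) :=
    fun i => indecomposable_map _ (hf _)
  have hindB : ∀ i, Indecomposable ((famB ∘ εB) i) :=
    fun i => indecomposable_map _ (hg _)
  obtain ⟨σ, hσ⟩ := hKS.2 _ _ _ _ hindA hindB totBig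
  -- counting
  let aA : C → ℤ → ℕ := fun X' s =>
    Nat.card {j : Fin n // Nonempty (f j ≅ (zpowFunctor e s).obj X')}
  let aB : C → ℤ → ℕ := fun X' s =>
    Nat.card {j : Fin m // Nonempty (g j ≅ (zpowFunctor e s).obj X')}
  have hconv : ∀ (X' : C) (t : ℤ),
      ∑ i ∈ Finset.Icc k l, b i * aA X' (t - i)
        = ∑ i ∈ Finset.Icc k l, b i * aB X' (t - i) := by
    intro X' t
    rw [← count_eq e k l b f X' t, ← count_eq e k l b g X' t]
    refine Nat.card_congr ?_
    refine ((Equiv.subtypeEquiv εA (fun i => Iff.rfl)).symm.trans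
      (Equiv.subtypeEquiv σ ?_)).trans (Equiv.subtypeEquiv εB (fun i => Iff.rfl))
    intro i
    constructor
    · intro ⟨h1⟩
      exact ⟨(hσ i).some.symm ≪≫ h1⟩
    · intro ⟨h1⟩
      exact ⟨(hσ i).some ≪≫ h1⟩
  have haeq : ∀ X' : C, ¬IsZero X' → ∀ s, aA X' s = aB X' s := by
    intro X' hX'
    refine conv_cancel k l b hb _ _ ?_ (hconv X')
    apply Set.Finite.subset
      ((support_finite e hF f X' hX').union (support_finite e hF g X' hX'))
    intro t ht
    rcases ht with h1 | h1
    · exact Or.inl h1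
    · exact Or.inr h1
  have hcount : ∀ X' : C,
      Nat.card {j : Fin n // Nonempty (f j ≅ X')}
        = Nat.card {j : Fin m // Nonempty (g j ≅ X')} := by
    intro X'
    by_cases hz : IsZero X'
    · have h1 : IsEmpty {j : Fin n // Nonempty (f j ≅ X')} :=
        ⟨fun ⟨j, ⟨ii⟩⟩ => (hf j).1 (hz.of_iso ii)⟩
      have h2 : IsEmpty {j : Fin m // Nonempty (g j ≅ X')} :=
        ⟨fun ⟨j, ⟨ii⟩⟩ => (hg j).1 (hz.of_iso ii)⟩
      rw [Nat.card_of_isEmpty, Nat.card_of_isEmpty]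
    · exact haeq X' hz 0
  -- build the bijection between summands of A and B
  let cl : C → Quotient (isIsomorphicSetoid C) := fun Z => Quotient.mk _ Z
  have hfib : ∀ q : Quotient (isIsomorphicSetoid C),
      Nat.card {j : Fin n // cl (f j) = q} = Nat.card {j : Fin m // cl (g j) = q} := by
    intro q
    obtain ⟨X', rfl⟩ := Quotient.exists_rep q
    have h1 : ∀ j : Fin n, (cl (f j) = Quotient.mk _ X') ↔ Nonempty (f j ≅ X') := by
      intro j
      constructor
      · intro hq
        exact Quotient.exact hq
      · intro hq
        exact Quotient.sound hq
    have h2 : ∀ j : Fin m, (cl (g j) = Quotient.mk _ X') ↔ Nonempty (g j ≅ X') := by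
      intro j
      constructor
      · intro hq
        exact Quotient.exact hq
      · intro hq
        exact Quotient.sound hq
    rw [Nat.card_congr (Equiv.subtypeEquivRight h1),
      Nat.card_congr (Equiv.subtypeEquivRight h2)]
    exact hcount X'
  have hfibequiv : ∀ q : Quotient (isIsomorphicSetoid C),
      {j : Fin n // cl (f j) = q} ≃ {j : Fin m // cl (g j) = q} := by
    intro q
    have hq := hfib q
    rw [Nat.card_eq_fintype_card, Nat.card_eq_fintype_card] at hq
    exact Fintype.equivOfCardEq hq
  let σ₂ : Fin n ≃ Fin m := Equiv.ofFiberEquiv hfibequiv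
  have hσ₂ : ∀ j, Nonempty (g (σ₂ j) ≅ f j) := by
    intro j
    have hcl := Equiv.ofFiberEquiv_map hfibequiv j
    exact Quotient.exact hcl
  exact ⟨iA ≪≫ biproduct.whiskerEquiv σ₂ (fun j => (hσ₂ j).some) ≪≫ iB.symm⟩

end
end

section
/- Fix an integer N ≥ 1 and integers m, n ≥ 0 with m + n ≤ N. Then for every subset A ⊆ 𝒩 with #A = m, one has in ℤ[q, q^{−1}]: Σ over subsets B ⊆ 𝒩∖A with #B = n of q^{mn − 2·π(A,B) − Σ_{b∈B} b} equals the quantum binomial coefficient [N−m choose n]. (This identity verifies MOY relation (4), the loop relation, for the Murakami–Ohtsuki–Yamada state sum.) -/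
/-!
Statement 14: Fix `N ≥ 1` and `m, n ≥ 0` with `m + n ≤ N`, and let
`𝒩 = {−N+1, −N+3, …, N−1}`.  Then for every subset `A ⊆ 𝒩` with `#A = m`, in
`ℤ[q, q⁻¹]`,
`Σ_{B ⊆ 𝒩∖A, #B = n} q^{mn − 2·π(A,B) − Σ_{b ∈ B} b} = [N−m choose n]`,
where `π(A₁, A₂) = #{(a₁,a₂) ∈ A₁ × A₂ : a₁ > a₂}`.  This verifies MOY relation (4)
(the loop relation) for the Murakami–Ohtsuki–Yamada state sum.

Quantum integers are represented by their closed form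
`[j] = q^{j−1} + q^{j−3} + ⋯ + q^{−(j−1)}` (which equals `(q^j − q^{−j})/(q − q^{−1})`),
and the identity `Σ = [N−m]!/([n]!·[N−m−n]!)` is stated with denominators cleared:
`Σ · [n]! · [N−m−n]! = [N−m]!` (which determines the quantum binomial uniquely, since
`ℤ[q,q⁻¹]` is an integral domain).
-/

open LaurentPolynomial

/-- The quantum integer `[j] = (q^j − q^{−j})/(q − q^{−1}) = Σ_{i=0}^{j−1} q^{2i−j+1}`
as a Laurent polynomial. -/
noncomputable def qInt (j : ℕ) : LaurentPolynomial ℤ :=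
  ∑ i ∈ Finset.range j, T (2 * (i : ℤ) - (j : ℤ) + 1)

/-- The quantum factorial `[j]! = [1][2]⋯[j]`. -/
noncomputable def qFact (j : ℕ) : LaurentPolynomial ℤ :=
  ∏ i ∈ Finset.range j, qInt (i + 1)

/-- The set `𝒩 = {−N+1, −N+3, …, N−3, N−1}` of `N` integers. -/
def moySet (N : ℕ) : Finset ℤ :=
  (Finset.range N).image fun i : ℕ => 2 * (i : ℤ) - (N : ℤ) + 1

/-- `π(A₁, A₂) = #{(a₁, a₂) ∈ A₁ × A₂ : a₁ > a₂}`. -/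
def moyPi (A₁ A₂ : Finset ℤ) : ℕ :=
  ((A₁ ×ˢ A₂).filter fun p => p.2 < p.1).card

open Finset in
lemma qFact_succ (j : ℕ) : qFact (j + 1) = qFact j * qInt (j + 1) := by
  rw [qFact, Finset.prod_range_succ]; rfl

lemma qFact_zero : qFact 0 = 1 := by simp [qFact]

lemma qInt_pascal (M n : ℕ) (hn : n ≤ M) :
    T (n : ℤ) * qInt (M - n) + T ((n : ℤ) - M) * qInt n = qInt M := by
  have h : M = n + (M - n) := (Nat.add_sub_cancel' hn).symm
  have hc : ((M - n : ℕ) : ℤ) = (M : ℤ) - n := by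
    push_cast [Nat.cast_sub hn]; ring
  symm
  calc qInt M = ∑ i ∈ Finset.range (n + (M - n)), T (2 * (i : ℤ) - (M : ℤ) + 1) := by
        rw [qInt, ← h]
    _ = (∑ i ∈ Finset.range n, T (2 * (i : ℤ) - (M : ℤ) + 1))
        + ∑ i ∈ Finset.range (M - n), T (2 * ((n + i : ℕ) : ℤ) - (M : ℤ) + 1) := by
        rw [Finset.sum_range_add]
    _ = T ((n : ℤ) - M) * qInt n + T (n : ℤ) * qInt (M - n) := by
        congr 1
        · rw [qInt, Finset.mul_sum]
          refine Finset.sum_congr rfl fun i _ => ?_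
          rw [← T_add]; ring_nf
        · rw [qInt, Finset.mul_sum]
          refine Finset.sum_congr rfl fun i _ => ?_
          rw [← T_add, hc]; push_cast; ring_nf
    _ = T (n : ℤ) * qInt (M - n) + T ((n : ℤ) - M) * qInt n := add_comm _ _

open Finset in
lemma key (M : ℕ) : ∀ C : Finset ℤ, C.card = M → ∀ n : ℕ, n ≤ M →
    (∑ B ∈ C.powersetCard n,
        T (∑ b ∈ B, ((M : ℤ) - 1 - 2 * ((C.filter (· < b)).card : ℤ))))
      * qFact n * qFact (M - n) = qFact M := by
  induction M with
  | zero =>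
    intro C hC n hn
    interval_cases n
    rw [Finset.card_eq_zero] at hC
    subst hC
    simp [qFact_zero]
  | succ M ih =>
    intro C hC n hn
    match n, hn with
    | 0, _ => simp [qFact_zero]
    | (k+1), hn =>
      have hne : C.Nonempty := by rw [← Finset.card_pos, hC]; omega
      set x := C.max' hne with hxdef
      have hx : x ∈ C := C.max'_mem hne
      set C' := C.erase x with hC'def
      have hxC' : x ∉ C' := Finset.notMem_erase _ _
      have hins : insert x C' = C := Finset.insert_erase hx
      have hC'card : C'.card = M := by
        rw [hC'def, Finset.card_erase_of_mem hx, hC]; omega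
      have hlt : ∀ c ∈ C', c < x := fun c hc =>
        lt_of_le_of_ne (C.le_max' c (Finset.mem_of_mem_erase hc))
          (Finset.ne_of_mem_erase hc)
      have hfilt1 : ∀ b ∈ C', C.filter (· < b) = C'.filter (· < b) := by
        intro b hb
        rw [← hins, Finset.filter_insert, if_neg (by simpa using (hlt b hb).not_gt)]
      have hfiltx : C.filter (· < x) = C' := by
        ext c
        simp only [Finset.mem_filter, hC'def, Finset.mem_erase]
        constructor
        · rintro ⟨hc, hlt'⟩; exact ⟨hlt'.ne, hc⟩
        · rintro ⟨hne', hc⟩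
          exact ⟨hc, lt_of_le_of_ne (C.le_max' c hc) hne'⟩
      have hsplit : C.powersetCard (k+1) =
          C'.powersetCard (k+1) ∪ (C'.powersetCard k).image (insert x) := by
        rw [← hins]; exact Finset.powersetCard_succ_insert hxC' k
      have hdisj : Disjoint (C'.powersetCard (k+1))
          ((C'.powersetCard k).image (insert x)) := by
        rw [Finset.disjoint_left]
        intro B hB hB'
        obtain ⟨B0, _, rfl⟩ := Finset.mem_image.1 hB'
        exact hxC' ((Finset.mem_powersetCard.1 hB).1 (Finset.mem_insert_self x B0))
      have hinj : ∀ B1 ∈ C'.powersetCard k, ∀ B2 ∈ C'.powersetCard k,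
          insert x B1 = insert x B2 → B1 = B2 := by
        intro B1 h1 B2 h2 heq
        have hx1 : x ∉ B1 := fun h => hxC' ((Finset.mem_powersetCard.1 h1).1 h)
        have hx2 : x ∉ B2 := fun h => hxC' ((Finset.mem_powersetCard.1 h2).1 h)
        rw [← Finset.erase_insert hx1, ← Finset.erase_insert hx2, heq]
      -- abbreviations
      set S1 : LaurentPolynomial ℤ := ∑ B ∈ C'.powersetCard (k+1),
          T (∑ b ∈ B, ((M : ℤ) - 1 - 2 * ((C'.filter (· < b)).card : ℤ))) with hS1
      set S2 : LaurentPolynomial ℤ := ∑ B ∈ C'.powersetCard k,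
          T (∑ b ∈ B, ((M : ℤ) - 1 - 2 * ((C'.filter (· < b)).card : ℤ))) with hS2
      have e1 : ∑ B ∈ C'.powersetCard (k+1),
            T (∑ b ∈ B, (((M+1 : ℕ) : ℤ) - 1 - 2 * ((C.filter (· < b)).card : ℤ)))
          = T ((k+1 : ℕ) : ℤ) * S1 := by
        rw [hS1, Finset.mul_sum]
        refine Finset.sum_congr rfl fun B hB => ?_
        obtain ⟨hBsub, hBcard⟩ := Finset.mem_powersetCard.1 hB
        rw [← T_add]
        congr 1
        have : ∀ b ∈ B, (((M+1 : ℕ) : ℤ) - 1 - 2 * ((C.filter (· < b)).card : ℤ))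
            = ((M : ℤ) - 1 - 2 * ((C'.filter (· < b)).card : ℤ)) + 1 := by
          intro b hb
          rw [hfilt1 b (hBsub hb)]; push_cast; ring
        rw [Finset.sum_congr rfl this, Finset.sum_add_distrib, Finset.sum_const, hBcard]
        push_cast; ring
      have e2 : ∑ B ∈ C'.powersetCard k,
            T (∑ b ∈ insert x B, (((M+1 : ℕ) : ℤ) - 1 - 2 * ((C.filter (· < b)).card : ℤ)))
          = T (((k+1 : ℕ) : ℤ) - ((M+1 : ℕ) : ℤ)) * S2 := by
        rw [hS2, Finset.mul_sum]
        refine Finset.sum_congr rfl fun B hB => ?_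
        obtain ⟨hBsub, hBcard⟩ := Finset.mem_powersetCard.1 hB
        have hxB : x ∉ B := fun h => hxC' (hBsub h)
        rw [← T_add]
        congr 1
        rw [Finset.sum_insert hxB]
        have hwx : (((M+1 : ℕ) : ℤ) - 1 - 2 * ((C.filter (· < x)).card : ℤ))
            = - (M : ℤ) := by rw [hfiltx, hC'card]; push_cast; ring
        have : ∀ b ∈ B, (((M+1 : ℕ) : ℤ) - 1 - 2 * ((C.filter (· < b)).card : ℤ))
            = ((M : ℤ) - 1 - 2 * ((C'.filter (· < b)).card : ℤ)) + 1 := by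
          intro b hb
          rw [hfilt1 b (hBsub hb)]; push_cast; ring
        rw [hwx, Finset.sum_congr rfl this, Finset.sum_add_distrib, Finset.sum_const, hBcard]
        push_cast; ring
      rw [hsplit, Finset.sum_union hdisj, Finset.sum_image hinj, e1, e2]
      -- now algebra
      have hpascal := qInt_pascal (M+1) (k+1) hn
      by_cases hk : k + 1 ≤ M
      · have ih1 := ih C' hC'card (k+1) hk
        have ih2 := ih C' hC'card k (le_of_lt hk)
        rw [← hS1] at ih1
        rw [← hS2] at ih2
        have hMk : M + 1 - (k + 1) = (M - (k+1)) + 1 := by omega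
        have hMk2 : M - k = (M - (k+1)) + 1 := by omega
        rw [hMk] at hpascal
        rw [hMk, qFact_succ, qFact_succ]
        rw [qFact_succ] at ih1
        rw [hMk2, qFact_succ] at ih2
        rw [qFact_succ]
        linear_combination (T ((k+1 : ℕ) : ℤ) * qInt (M - (k+1) + 1)) * ih1
          + (T (((k+1 : ℕ) : ℤ) - ((M+1 : ℕ) : ℤ)) * qInt (k+1)) * ih2
          + qFact M * hpascal
      · have hkM : k = M := by omega
        subst hkM
        have hS1z : S1 = 0 := by
          rw [hS1, Finset.powersetCard_eq_empty.2 (by omega), Finset.sum_empty]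
        have ih2 := ih C' hC'card k le_rfl
        rw [← hS2, Nat.sub_self, qFact_zero, mul_one] at ih2
        have h0 : ((k+1 : ℕ) : ℤ) - ((k+1 : ℕ) : ℤ) = 0 := by ring
        rw [hS1z, mul_zero, zero_add, h0, T_zero, one_mul, Nat.sub_self, qFact_zero,
          mul_one, qFact_succ, ← mul_assoc, ih2]

open Finset in
lemma moySet_card (N : ℕ) : (moySet N).card = N := by
  rw [moySet, Finset.card_image_of_injective _ fun a b h => by omega, Finset.card_range]

lemma moyPi_eq (A B : Finset ℤ) :
    moyPi A B = ∑ b ∈ B, (A.filter fun a => b < a).card := by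
  rw [moyPi, Finset.card_filter, Finset.sum_product, Finset.sum_comm]
  exact Finset.sum_congr rfl fun b _ => by rw [Finset.card_filter]


theorem moy_loop_evaluation (N m n : ℕ) (hN : 1 ≤ N) (hmn : m + n ≤ N)
    (A : Finset ℤ) (hA : A ⊆ moySet N) (hAcard : A.card = m) :
    (∑ B ∈ (moySet N \ A).powersetCard n,
        T (((m : ℤ) * n) - 2 * (moyPi A B : ℤ) - ∑ b ∈ B, b))
        * qFact n * qFact (N - m - n)
      = qFact (N - m) := by
  classical
  set C := moySet N \ A with hCdef
  have hm : m ≤ N := by omega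
  have hMcard : C.card = N - m := by
    rw [hCdef, Finset.card_sdiff_of_subset hA, moySet_card, hAcard]
  have hn' : n ≤ N - m := by omega
  -- per-element weight identity
  have hw : ∀ b ∈ C, (m : ℤ) - 2 * ((A.filter fun a => b < a).card : ℤ) - b
      = ((N - m : ℕ) : ℤ) - 1 - 2 * ((C.filter (· < b)).card : ℤ) := by
    intro b hbC
    have hb𝒩 : b ∈ moySet N := (Finset.mem_sdiff.1 hbC).1
    obtain ⟨p, hp, hbp⟩ := Finset.mem_image.1 hb𝒩
    have hpN : p < N := Finset.mem_range.1 hp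
    -- split count over moySet
    have cnt1 : ((moySet N).filter fun a => b < a).card
        = (A.filter fun a => b < a).card + (C.filter fun a => b < a).card := by
      have hU : moySet N = A ∪ C := (Finset.union_sdiff_of_subset hA).symm
      rw [hU, Finset.filter_union,
        Finset.card_union_of_disjoint
          (Finset.disjoint_filter_filter Finset.disjoint_sdiff)]
    -- count in moySet above b
    have cnt2 : ((moySet N).filter fun a => b < a).card = N - (p + 1) := by
      rw [moySet, Finset.filter_image,
        Finset.card_image_of_injective _ (fun i1 i2 h => by simp only at h; omega : Function.Injective
          fun i : ℕ => 2 * (i : ℤ) - (N : ℤ) + 1)]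
      have : (Finset.range N).filter (fun i : ℕ => b < 2 * (i : ℤ) - (N : ℤ) + 1)
          = Finset.Ico (p + 1) N := by
        ext i
        simp only [Finset.mem_filter, Finset.mem_range, Finset.mem_Ico]
        omega
      rw [this, Nat.card_Ico]
    -- partition of C around b
    have cnt3 : (C.filter (· < b)).card + (C.filter fun c => b < c).card + 1
        = C.card := by
      have hsplit := Finset.card_filter_add_card_filter_not
        (s := C) (p := (· < b))
      have hins : C.filter (fun c => ¬ c < b) = insert b (C.filter fun c => b < c) := by
        ext c
        simp only [Finset.mem_filter, Finset.mem_insert, not_lt]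
        constructor
        · rintro ⟨hc, hbc⟩
          rcases eq_or_lt_of_le hbc with h | h
          · exact Or.inl h.symm
          · exact Or.inr ⟨hc, h⟩
        · rintro (rfl | ⟨hc, h⟩)
          · exact ⟨hbC, le_refl _⟩
          · exact ⟨hc, h.le⟩
      rw [hins, Finset.card_insert_of_notMem (by simp)] at hsplit
      omega
    rw [hMcard] at cnt3
    omega
  have hkey := key (N - m) C hMcard n hn'
  rw [← hkey]
  congr 2
  refine Finset.sum_congr rfl fun B hB => ?_
  obtain ⟨hBsub, hBcard⟩ := Finset.mem_powersetCard.1 hB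
  congr 1
  have hpi : ((moyPi A B : ℕ) : ℤ) = ∑ b ∈ B, ((A.filter fun a => b < a).card : ℤ) := by
    rw [moyPi_eq]; push_cast; rfl
  have expand : ∑ b ∈ B, ((m : ℤ) - 2 * ((A.filter fun a => b < a).card : ℤ) - b)
      = (m : ℤ) * n - 2 * (moyPi A B : ℤ) - ∑ b ∈ B, b := by
    simp only [Finset.sum_sub_distrib, Finset.sum_const, hBcard, nsmul_eq_mul,
      ← Finset.mul_sum, ← hpi]
    ring
  rw [← expand]
  exact Finset.sum_congr rfl fun b hb => hw b (hBsub hb)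
end
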